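/- For every γ > 0, lim_{t→∞} η(t)/t^γ = 0. -/

import Mathlib

open Set Filter Topology

/-- Hypotheses (P1)–(P3) on `φ(t) = η(t)·t`. -/
def PhiHyp (φ η : ℝ → ℝ) (Lam0 : ℝ) : Prop :=
  (∀ t : ℝ, 0 ≤ t → φ t = η t * t) ∧
  (∀ t : ℝ, 0 ≤ t → 1 ≤ η t) ∧
  MonotoneOn φ (Set.Ici 0) ∧
  (∀ t₀ : ℝ, 0 < t₀ → ∃ ε > (0 : ℝ), ∃ K : NNReal,
    LipschitzOnWith K φ (Set.Ioo (t₀ - ε) (t₀ + ε))) ∧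
  (∀ t : ℝ, 0 ≤ t → t ≤ φ t) ∧
  AntitoneOn η (Set.Ioo 0 1) ∧
  MonotoneOn η (Set.Ici 1) ∧
  (∃ T : ℝ, ∀ t : ℝ, T ≤ t → DifferentiableAt ℝ η t) ∧
  Filter.Tendsto (fun t => t * deriv η t / η t * Real.log (η t)) Filter.atTop (nhds 0) ∧
  0 < Lam0 ∧
  (∀ s t : ℝ, 0 < s → 0 < t → η (s * t) ≤ Lam0 * η s * η t)

/-- Lemma 2.4 (ii): for every `γ > 0`, `lim_{t→∞} η(t)/t^γ = 0`. -/
theorem statement2 (φ η : ℝ → ℝ) (Lam0 : ℝ) (hφ : PhiHyp φ η Lam0) :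
    ∀ γ : ℝ, 0 < γ →
      Filter.Tendsto (fun t : ℝ => η t / t ^ γ) Filter.atTop (nhds 0) := by
  obtain ⟨-, hη1, -, -, -, -, -, ⟨T, hT⟩, h9, -, -⟩ := hφ
  intro γ hγ
  -- From h9, get a bound `|t η'(t)/η(t) log η(t)| ≤ 1/2` for large t
  have hball : ∀ᶠ t in atTop,
      |t * deriv η t / η t * Real.log (η t)| ≤ 1/2 := by
    have := h9.eventually (Metric.ball_mem_nhds (0:ℝ) (by norm_num : (0:ℝ) < 1/2))
    filter_upwards [this] with t ht
    rw [Real.dist_eq, sub_zero] at ht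
    exact ht.le
  obtain ⟨T₁, hT₁⟩ := eventually_atTop.1 hball
  set a : ℝ := max (max T T₁) 1 with ha
  have ha1 : (1:ℝ) ≤ a := le_max_right _ _
  have ha0 : (0:ℝ) < a := lt_of_lt_of_le one_pos ha1
  -- properties for t ≥ a
  have hdiff : ∀ t : ℝ, a ≤ t → DifferentiableAt ℝ η t := fun t ht =>
    hT t (le_trans (le_trans (le_max_left _ _) (le_max_left _ _)) ht)
  have hbd : ∀ t : ℝ, a ≤ t → |t * deriv η t / η t * Real.log (η t)| ≤ 1/2 := fun t ht =>
    hT₁ t (le_trans (le_trans (le_max_right _ _) (le_max_left _ _)) ht)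
  have hηpos : ∀ t : ℝ, a ≤ t → 1 ≤ η t := fun t ht =>
    hη1 t (le_trans ha0.le ht)
  set s₀ : ℝ := Real.log a with hs₀
  -- F s = (log η(exp s))²
  set F : ℝ → ℝ := fun s => (Real.log (η (Real.exp s)))^2 with hF
  set F' : ℝ → ℝ := fun s =>
    2 * Real.log (η (Real.exp s)) * (deriv η (Real.exp s) * Real.exp s / η (Real.exp s)) with hF'
  have hexp_ge : ∀ s : ℝ, s₀ ≤ s → a ≤ Real.exp s := by
    intro s hs
    calc a = Real.exp s₀ := (Real.exp_log ha0).symm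
    _ ≤ Real.exp s := Real.exp_le_exp.2 hs
  have hFderiv : ∀ s ∈ Set.Ici s₀, HasDerivWithinAt F (F' s) (Set.Ici s₀) s := by
    intro s hs
    have hes := hexp_ge s hs
    have h1 : HasDerivAt Real.exp (Real.exp s) s := Real.hasDerivAt_exp s
    have h2 : HasDerivAt η (deriv η (Real.exp s)) (Real.exp s) :=
      (hdiff _ hes).hasDerivAt
    have h3 : HasDerivAt (fun s => η (Real.exp s))
        (deriv η (Real.exp s) * Real.exp s) s := h2.comp s h1
    have hne : η (Real.exp s) ≠ 0 := by
      have := hηpos _ hes; linarith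
    have h4 : HasDerivAt (fun s => Real.log (η (Real.exp s)))
        (deriv η (Real.exp s) * Real.exp s / η (Real.exp s)) s := h3.log hne
    have h5 := h4.pow 2
    have : HasDerivAt F (F' s) s := by
      exact h5.congr_deriv (by simp only [hF']; ring)
    exact this.hasDerivWithinAt
  have hFbound : ∀ s ∈ Set.Ici s₀, ‖F' s‖ ≤ 1 := by
    intro s hs
    have h := hbd _ (hexp_ge s hs)
    have : F' s = 2 * (Real.exp s * deriv η (Real.exp s) / η (Real.exp s)
        * Real.log (η (Real.exp s))) := by simp only [hF']; ring
    rw [Real.norm_eq_abs, this, abs_mul]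
    calc |(2:ℝ)| * |Real.exp s * deriv η (Real.exp s) / η (Real.exp s)
        * Real.log (η (Real.exp s))| ≤ 2 * (1/2) := by
          rw [abs_two]
          exact mul_le_mul_of_nonneg_left h (by norm_num)
      _ = 1 := by norm_num
  -- MVT bound
  have hFle : ∀ s : ℝ, s₀ ≤ s → F s ≤ F s₀ + (s - s₀) := by
    intro s hs
    have := (convex_Ici s₀).norm_image_sub_le_of_norm_hasDerivWithin_le
      hFderiv hFbound (Set.self_mem_Ici) hs
    rw [Real.norm_eq_abs, Real.norm_eq_abs, one_mul] at this
    have h' : |F s - F s₀| ≤ s - s₀ := this.trans_eq (abs_of_nonneg (by linarith))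
    linarith [(abs_le.1 h').2]
  set C : ℝ := F s₀ - s₀ with hC
  -- key bound: log η t ≤ √(C + log t) for t ≥ a
  have hkey : ∀ t : ℝ, a ≤ t → Real.log (η t) ≤ Real.sqrt (C + Real.log t) := by
    intro t ht
    have ht0 : (0:ℝ) < t := lt_of_lt_of_le ha0 ht
    have hls : s₀ ≤ Real.log t := Real.log_le_log ha0 ht
    have h1 := hFle (Real.log t) hls
    have h2 : F (Real.log t) = (Real.log (η t))^2 := by
      simp [hF, Real.exp_log ht0]
    apply Real.le_sqrt_of_sq_le
    rw [← h2]
    calc F (Real.log t) ≤ F s₀ + (Real.log t - s₀) := h1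
      _ = C + Real.log t := by ring
  -- final squeeze
  have hup : Tendsto (fun t : ℝ => Real.exp (Real.sqrt (C + Real.log t) - γ * Real.log t))
      atTop (nhds 0) := by
    apply Real.tendsto_exp_atBot.comp
    have hu : Tendsto (fun u : ℝ => Real.sqrt (C + u) - γ * u) atTop atBot := by
      refine tendsto_atBot_mono' atTop (f₁ := fun u => Real.sqrt |C| - γ/2 * u) ?_ ?_
      · -- eventually bound by √|C| - (γ/2) u
        filter_upwards [eventually_ge_atTop ((2/γ)^2), eventually_ge_atTop (0:ℝ)] with u hu hu0
        show Real.sqrt (C + u) - γ * u ≤ Real.sqrt |C| - γ/2 * u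
        have h1 : Real.sqrt (C + u) ≤ Real.sqrt (|C| + u) :=
          Real.sqrt_le_sqrt (by cases abs_cases C with
            | inl h => linarith [h.1]
            | inr h => linarith [h.1])
        have h2 : Real.sqrt (|C| + u) ≤ Real.sqrt |C| + Real.sqrt u := by
          have := Real.sqrt_le_sqrt (le_of_eq (rfl : |C| + u = |C| + u))
          nlinarith [Real.sq_sqrt (abs_nonneg C), Real.sq_sqrt hu0,
            Real.sqrt_nonneg |C|, Real.sqrt_nonneg u,
            Real.sq_sqrt (by linarith [abs_nonneg C] : (0:ℝ) ≤ |C| + u),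
            Real.sqrt_nonneg (|C| + u)]
        have h3 : Real.sqrt u ≤ γ/2 * u := by
          have hsq : 2/γ ≤ Real.sqrt u := by
            have h5 := Real.sqrt_le_sqrt hu
            rwa [Real.sqrt_sq (by positivity)] at h5
          have husq : Real.sqrt u * Real.sqrt u = u := Real.mul_self_sqrt hu0
          have h6 : (2/γ) * Real.sqrt u ≤ u := by
            have := mul_le_mul_of_nonneg_right hsq (Real.sqrt_nonneg u)
            rwa [husq] at this
          calc Real.sqrt u = (γ/2) * ((2/γ) * Real.sqrt u) := by field_simp
            _ ≤ γ/2 * u := mul_le_mul_of_nonneg_left h6 (by positivity)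
        linarith
      · have : Tendsto (fun u : ℝ => γ/2 * u) atTop atTop :=
          Tendsto.const_mul_atTop (by positivity) tendsto_id
        have h5 : Tendsto (fun u : ℝ => -(γ/2 * u)) atTop atBot := tendsto_neg_atBot_iff.2 this
        have := tendsto_atBot_add_const_left atTop (Real.sqrt |C|) h5
        simpa [sub_eq_add_neg] using this
    exact hu.comp Real.tendsto_log_atTop
  apply tendsto_of_tendsto_of_tendsto_of_le_of_le' tendsto_const_nhds hup
  · filter_upwards [eventually_ge_atTop a] with t ht
    have ht0 : (0:ℝ) < t := lt_of_lt_of_le ha0 ht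
    have : (0:ℝ) < η t := lt_of_lt_of_le one_pos (hηpos t ht)
    positivity
  · filter_upwards [eventually_ge_atTop a] with t ht
    have ht0 : (0:ℝ) < t := lt_of_lt_of_le ha0 ht
    have hη0 : (0:ℝ) < η t := lt_of_lt_of_le one_pos (hηpos t ht)
    have heq : η t / t ^ γ = Real.exp (Real.log (η t) - γ * Real.log t) := by
      rw [Real.exp_sub, Real.exp_log hη0]
      congr 1
      rw [Real.rpow_def_of_pos ht0, mul_comm]
    rw [heq]
    exact Real.exp_le_exp.2 (by linarith [hkey t ht])
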